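/- Let n and d be positive integers with d(d+1)+1 < n, and let t₁, …, t_d be integers with Σ tᵢ = n−1 and each tᵢ ≥ d+1. Let G_t be the graph obtained from the disjoint union of complete graphs H₁, …, H_d of orders t₁, …, t_d by adding a new vertex u joined to exactly one vertex vᵢ of each Hᵢ. Then σ*(G_t) = n − 1. -/

import Mathlib

/-- Vertex type of the graph `G_t`: a new vertex `u` (`none`) together with the
disjoint union of the vertex sets of complete graphs `H₁, …, H_d` of orders
`t 0, …, t (d−1)` (`some ⟨i, j⟩` is the `j`-th vertex of `Hᵢ`). -/
abbrev GtV (d : ℕ) (t : Fin d → ℕ) := Option (Σ i : Fin d, Fin (t i))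

/-- Underlying edge relation of `G_t`: each `Hᵢ` is complete (via `fromRel`, which
only keeps distinct pairs), and the vertex `u = none` is joined to exactly one
vertex `vᵢ` (the one with index `0`) of each `Hᵢ`. -/
def gtRel (d : ℕ) (t : Fin d → ℕ) : GtV d t → GtV d t → Bool
  | none, some ⟨_, j⟩ => j.val == 0
  | some ⟨i, _⟩, some ⟨i', _⟩ => i == i'
  | _, _ => false

/-- The graph `G_t`. -/
def Gt (d : ℕ) (t : Fin d → ℕ) : SimpleGraph (GtV d t) :=
  SimpleGraph.fromRel (fun x y => gtRel d t x y = true)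

instance {d : ℕ} {t : Fin d → ℕ} : DecidableRel (Gt d t).Adj :=
  fun x y => decidable_of_iff _ (SimpleGraph.fromRel_adj _ x y).symm

/-- `I` is an independent set of `G`. -/
def IsIndep {V : Type*} (G : SimpleGraph V) (I : Finset V) : Prop :=
  ∀ u ∈ I, ∀ v ∈ I, u ≠ v → ¬ G.Adj u v

/-- `I` is a large independent set: `|I| ≥ δ_G(I) + 1`. -/
def IsLarge {V : Type*} [Fintype V] (G : SimpleGraph V) [DecidableRel G.Adj]
    (I : Finset V) : Prop :=
  ∃ u ∈ I, G.degree u + 1 ≤ I.card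

section Aux

variable {d : ℕ} {t : Fin d → ℕ}

lemma adj_none_some (i : Fin d) (j : Fin (t i)) :
    (Gt d t).Adj none (some ⟨i, j⟩) ↔ j.val = 0 := by
  simp [Gt, SimpleGraph.fromRel_adj, gtRel]

lemma adj_some_some (i i' : Fin d) (j : Fin (t i)) (j' : Fin (t i')) :
    (Gt d t).Adj (some ⟨i, j⟩) (some ⟨i', j'⟩) ↔
      i = i' ∧ (⟨i, j⟩ : Σ i, Fin (t i)) ≠ ⟨i', j'⟩ := by
  simp only [Gt, SimpleGraph.fromRel_adj, gtRel, beq_iff_eq, Ne, Option.some.injEq]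
  constructor
  · rintro ⟨h1, h2 | h2⟩
    · exact ⟨h2, h1⟩
    · exact ⟨h2.symm, h1⟩
  · rintro ⟨rfl, h⟩; exact ⟨h, Or.inl rfl⟩

lemma adj_some_none (i : Fin d) (j : Fin (t i)) :
    (Gt d t).Adj (some ⟨i, j⟩) none ↔ j.val = 0 := by
  rw [SimpleGraph.adj_comm]; exact adj_none_some i j

lemma sigma_mk_ne (i : Fin d) (j j' : Fin (t i)) :
    (⟨i, j⟩ : Σ i, Fin (t i)) ≠ ⟨i, j'⟩ ↔ j ≠ j' := by
  simp

lemma neighborFinset_none (ht0 : ∀ i, 0 < t i) :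
    (Gt d t).neighborFinset none =
      Finset.univ.image (fun i : Fin d => (some ⟨i, ⟨0, ht0 i⟩⟩ : GtV d t)) := by
  ext x
  cases x with
  | none => rw [SimpleGraph.mem_neighborFinset]; simp [Gt, SimpleGraph.fromRel_adj, gtRel]
  | some p =>
    obtain ⟨i, j⟩ := p
    rw [SimpleGraph.mem_neighborFinset, adj_none_some]
    simp only [Finset.mem_image, Finset.mem_univ, true_and, Option.some.injEq]
    constructor
    · intro h
      exact ⟨i, by congr 1; exact Fin.ext h.symm⟩
    · rintro ⟨i', h⟩
      obtain ⟨rfl, h2⟩ := Sigma.mk.inj_iff.mp h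
      rw [← eq_of_heq h2]

lemma degree_none (ht0 : ∀ i, 0 < t i) : (Gt d t).degree none = d := by
  rw [SimpleGraph.degree, neighborFinset_none ht0,
    Finset.card_image_of_injective _ (fun a b h => by
      obtain ⟨h1, _⟩ := Sigma.mk.inj_iff.mp (Option.some.injEq _ _ ▸ h)
      exact h1)]
  simp

lemma neighborFinset_some (i : Fin d) (j : Fin (t i)) :
    (Gt d t).neighborFinset (some ⟨i, j⟩) =
      ((Finset.univ.erase j).image (fun j' => (some ⟨i, j'⟩ : GtV d t)))
      ∪ (if j.val = 0 then {none} else ∅) := by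
  ext x
  cases x with
  | none =>
    rw [SimpleGraph.mem_neighborFinset, adj_some_none]
    by_cases h : j.val = 0 <;> simp [h]
  | some p =>
    obtain ⟨i', j'⟩ := p
    rw [SimpleGraph.mem_neighborFinset, adj_some_some]
    simp only [Finset.mem_union, Finset.mem_image, Finset.mem_erase, Finset.mem_univ,
      and_true, Option.some.injEq]
    constructor
    · rintro ⟨rfl, hne⟩
      left
      exact ⟨j', (sigma_mk_ne i j j').mp hne |>.symm, rfl⟩
    · rintro (⟨j'', hne, h⟩ | h)
      · obtain ⟨rfl, h2⟩ := Sigma.mk.inj_iff.mp h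
        refine ⟨rfl, (sigma_mk_ne i j j').mpr ?_⟩
        rw [← eq_of_heq h2]; exact hne.symm
      · by_cases h0 : j.val = 0 <;> simp [h0] at h

lemma degree_some (i : Fin d) (j : Fin (t i)) :
    (Gt d t).degree (some ⟨i, j⟩) = if j.val = 0 then t i else t i - 1 := by
  have hinj : Function.Injective (fun j' => (some ⟨i, j'⟩ : GtV d t)) := by
    intro a b h
    obtain ⟨_, h2⟩ := Sigma.mk.inj_iff.mp (Option.some.injEq _ _ ▸ h)
    exact eq_of_heq h2
  have hdisj : ∀ s : Finset (Fin (t i)), Disjoint (s.image (fun j' => (some ⟨i, j'⟩ : GtV d t)))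
      (if j.val = 0 then ({none} : Finset (GtV d t)) else ∅) := by
    intro s
    by_cases h : j.val = 0 <;> simp [h, Finset.disjoint_left]
  rw [SimpleGraph.degree, neighborFinset_some, Finset.card_union_of_disjoint (hdisj _),
    Finset.card_image_of_injective _ hinj]
  have hcard : (Finset.univ.erase j).card = t i - 1 := by
    rw [Finset.card_erase_of_mem (Finset.mem_univ j)]; simp
  by_cases h : j.val = 0 <;> simp [h, hcard]
  omega

end Aux

/-- Let `n, d` be positive integers with `d(d+1)+1 < n` and let
`t₁, …, t_d` be integers with `Σ tᵢ = n − 1` and each `tᵢ ≥ d + 1`. Then the graph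
`G_t` satisfies `σ*(G_t) = n − 1`: every large independent set has degree sum
`≥ n − 1`, and some large independent set has degree sum exactly `n − 1`. -/


theorem stmt11 (n d : ℕ) (t : Fin d → ℕ) (hd : 0 < d) (hn : d * (d + 1) + 1 < n)
    (hsum : ∑ i, t i = n - 1) (ht : ∀ i, d + 1 ≤ t i) :
    (∀ I : Finset (GtV d t), IsIndep (Gt d t) I → IsLarge (Gt d t) I →
      n - 1 ≤ ∑ u ∈ I, (Gt d t).degree u) ∧
    (∃ I : Finset (GtV d t), IsIndep (Gt d t) I ∧ IsLarge (Gt d t) I ∧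
      ∑ u ∈ I, (Gt d t).degree u = n - 1) := by
  have ht0 : ∀ i, 0 < t i := fun i => lt_of_lt_of_le (by omega) (ht i)
  have ht1 : ∀ i, 1 < t i := fun i => lt_of_lt_of_le (by omega) (ht i)
  set w' : Option (Fin d) → ℕ := fun o => o.elim d (fun i => t i - 1) with hw'
  set F : GtV d t → Option (Fin d) := Option.map Sigma.fst with hF
  have hdeg_ge : ∀ u : GtV d t, w' (F u) ≤ (Gt d t).degree u := by
    intro u
    cases u with
    | none => simp [hw', hF, degree_none ht0]
    | some p =>
      obtain ⟨i, j⟩ := p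
      rw [degree_some]
      by_cases h : j.val = 0 <;> simp [hw', hF, h] <;> omega
  have hsum1 : ∑ i, (t i - 1) + d = n - 1 := by
    have h1 : ∑ i, (t i - 1) + ∑ _i : Fin d, 1 = ∑ i, t i := by
      rw [← Finset.sum_add_distrib]
      exact Finset.sum_congr rfl fun i _ => by have := ht0 i; omega
    simp only [Finset.sum_const, smul_eq_mul, mul_one, Finset.card_univ,
      Fintype.card_fin] at h1
    omega
  have hunivsum : ∑ x : Option (Fin d), w' x = n - 1 := by
    rw [Fintype.sum_option]
    simp only [hw', Option.elim]
    omega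
  constructor
  · intro I hI hL
    have hinjOn : Set.InjOn F ↑I := by
      intro x hx y hy hxy
      by_contra hne
      refine hI x hx y hy hne ?_
      cases x with
      | none =>
        cases y with
        | none => exact absurd rfl hne
        | some p => simp [hF] at hxy
      | some p =>
        cases y with
        | none => simp [hF] at hxy
        | some q =>
          obtain ⟨i, j⟩ := p; obtain ⟨i', j'⟩ := q
          simp only [hF, Option.map_some, Option.some.injEq] at hxy
          subst hxy
          exact (adj_some_some i i j j').mpr ⟨rfl, fun h => hne (by rw [h])⟩
    have hcard_le : I.card ≤ d + 1 := by
      have := Finset.card_le_card_of_injOn F (fun x _ => Finset.mem_univ _) hinjOn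
      simpa [Fintype.card_option] using this
    obtain ⟨v, hvI, hv⟩ := hL
    have hdv : d ≤ (Gt d t).degree v := by
      cases v with
      | none => rw [degree_none ht0]
      | some p =>
        obtain ⟨i, j⟩ := p
        rw [degree_some]
        have := ht i
        split <;> omega
    have hcard : I.card = d + 1 := by omega
    have himg : I.image F = Finset.univ := by
      apply Finset.eq_univ_of_card
      rw [Finset.card_image_of_injOn hinjOn, hcard, Fintype.card_option, Fintype.card_fin]
    calc n - 1 = ∑ x : Option (Fin d), w' x := hunivsum.symm
      _ = ∑ x ∈ I.image F, w' x := by rw [himg]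
      _ = ∑ u ∈ I, w' (F u) :=
        Finset.sum_image fun x hx y hy h => hinjOn hx hy h
      _ ≤ ∑ u ∈ I, (Gt d t).degree u := Finset.sum_le_sum fun u _ => hdeg_ge u
  · have hinj : Function.Injective (fun i : Fin d => (some ⟨i, ⟨1, ht1 i⟩⟩ : GtV d t)) := by
      intro a b h
      obtain ⟨h1, _⟩ := Sigma.mk.inj_iff.mp (Option.some.injEq _ _ ▸ h)
      exact h1
    set S : Finset (GtV d t) := Finset.univ.image fun i : Fin d => (some ⟨i, ⟨1, ht1 i⟩⟩ : GtV d t)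
      with hS
    have hnone : (none : GtV d t) ∉ S := by simp [hS]
    have hScard : S.card = d := by
      rw [hS, Finset.card_image_of_injective _ hinj]; simp
    refine ⟨insert none S, ?_, ?_, ?_⟩
    · intro x hx y hy hne hadj
      simp only [Finset.mem_insert, hS, Finset.mem_image, Finset.mem_univ, true_and] at hx hy
      rcases hx with rfl | ⟨i, rfl⟩ <;> rcases hy with rfl | ⟨i', rfl⟩
      · exact hne rfl
      · rw [adj_none_some] at hadj; simp at hadj
      · rw [adj_some_none] at hadj; simp at hadj
      · obtain ⟨rfl, h2⟩ := (adj_some_some _ _ _ _).mp hadj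
        exact h2 rfl
    · refine ⟨none, Finset.mem_insert_self _ _, ?_⟩
      rw [degree_none ht0, Finset.card_insert_of_notMem hnone, hScard]
    · rw [Finset.sum_insert hnone, degree_none ht0, hS,
        Finset.sum_image fun x _ y _ h => hinj h]
      have : ∀ i : Fin d, (Gt d t).degree (some ⟨i, ⟨1, ht1 i⟩⟩) = t i - 1 := by
        intro i
        rw [degree_some]
        simp
      rw [Finset.sum_congr rfl fun i _ => this i]
      omega
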